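/- Let q, N ∈ ℕ_+ with q ≤ N, and let (ζ_l^{(1)}, …, ζ_l^{(q)}), l = 1, …, N, be independent and identically distributed random vectors with values in (ℝ ∪ {−∞})^q satisfying ζ_l^{(1)} ≥ ζ_l^{(2)} ≥ ⋯ ≥ ζ_l^{(q)} almost surely. Fix x ∈ ℝ and for each l let c_l := #{i ∈ {1,…,q} : ζ_l^{(i)} > x}. Then for every k ∈ {0, 1, …, q−1}: P( Σ_{l=1}^N c_l ≤ q−1 and #{l : c_l ≥ 1} = k ) = Σ_{(j_1,…,j_{q−1}) ∈ J_{q,k}} ( N! / (j_1!⋯j_{q−1}!(N−k)!) ) · P(ζ_1^{(1)} ≤ x)^{N−k} · ∏_{i=1}^{q−1} P(ζ_1^{(i+1)} ≤ x < ζ_1^{(i)})^{j_i}, where J_{q,k} := {(j_1,…,j_{q−1}) ∈ ℕ^{q−1} : Σ_{i=1}^{q−1} j_i = k and Σ_{i=1}^{q−1} i·j_i ≤ q−1}. -/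

import Mathlib

open MeasureTheory ProbabilityTheory Filter
open scoped ENNReal

section AuxiliaryLemmas
open Finset
set_option maxHeartbeats 1000000

lemma aux_card_fiber {α β : Type*} [Fintype α] [DecidableEq α] [Fintype β] [DecidableEq β]
    (n : β → ℕ) (h : ∑ b, n b = Fintype.card α) :
    (Finset.univ.filter fun f : α → β =>
        ∀ b, (Finset.univ.filter fun a => f a = b).card = n b).card =
      Nat.multinomial Finset.univ n := by
  classical
  set μ : (β → ℕ) → (β →₀ ℕ) := fun m => Finsupp.equivFunOnFinite.symm m with hμ
  have hμcoe : ∀ m : β → ℕ, ⇑(μ m) = m := fun m => rfl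
  have hμinj : Function.Injective μ := Finsupp.equivFunOnFinite.symm.injective
  set w : (α → β) → (β →₀ ℕ) := fun f => ∑ a, Finsupp.single (f a) 1 with hw
  -- expansion 1
  have e1 : ((∑ b, (MvPolynomial.X b : MvPolynomial β ℕ)) ^ Fintype.card α)
      = ∑ f : α → β, MvPolynomial.monomial (w f) 1 := by
    rw [← Finset.card_univ, ← Finset.prod_const, Finset.prod_univ_sum]
    rw [Fintype.piFinset_univ]
    refine Finset.sum_congr rfl fun f _ => ?_
    rw [hw, MvPolynomial.monomial_sum_one]
    exact Finset.prod_congr rfl fun i _ => rfl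
  have e2 : ((∑ b, (MvPolynomial.X b : MvPolynomial β ℕ)) ^ Fintype.card α)
      = ∑ j ∈ Finset.piAntidiag Finset.univ (Fintype.card α),
          (Nat.multinomial Finset.univ j : MvPolynomial β ℕ) *
            MvPolynomial.monomial (μ j) 1 := by
    rw [Finset.sum_pow_eq_sum_piAntidiag]
    refine Finset.sum_congr rfl fun j _ => ?_
    congr 1
    rw [← MvPolynomial.prod_X_pow_eq_monomial]
    refine (Finset.prod_subset (Finset.subset_univ _) fun b _ hb => ?_).symm
    rw [Finsupp.notMem_support_iff, hμcoe] at hb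
    rw [hb, pow_zero]
  have hco1 : MvPolynomial.coeff (μ n) ((∑ b, (MvPolynomial.X b : MvPolynomial β ℕ)) ^ Fintype.card α)
      = (Finset.univ.filter fun f : α → β => w f = μ n).card := by
    rw [e1, MvPolynomial.coeff_sum]
    rw [Finset.card_filter]
    refine Finset.sum_congr rfl fun f _ => ?_
    rw [MvPolynomial.coeff_monomial]
  have hco2 : MvPolynomial.coeff (μ n) ((∑ b, (MvPolynomial.X b : MvPolynomial β ℕ)) ^ Fintype.card α)
      = Nat.multinomial Finset.univ n := by
    rw [e2, MvPolynomial.coeff_sum]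
    have hmem : n ∈ Finset.piAntidiag Finset.univ (Fintype.card α) := by
      rw [Finset.mem_piAntidiag]; exact ⟨h, fun i _ => Finset.mem_univ i⟩
    rw [Finset.sum_eq_single_of_mem n hmem]
    · rw [← MvPolynomial.C_eq_coe_nat, MvPolynomial.coeff_C_mul, MvPolynomial.coeff_monomial,
        if_pos rfl, mul_one, Nat.cast_id]
    · intro j _ hj
      rw [← MvPolynomial.C_eq_coe_nat, MvPolynomial.coeff_C_mul, MvPolynomial.coeff_monomial,
        if_neg (fun hjn => hj (hμinj hjn)), mul_zero]
  rw [← hco2, hco1]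
  congr 1
  have hwf : ∀ (f : α → β) (b : β), w f b = (Finset.univ.filter fun a => f a = b).card := by
    intro f b
    rw [hw, Finset.card_filter]
    simp only [Finset.sum_apply']
    exact Finset.sum_congr rfl fun a _ => by rw [Finsupp.single_apply]
  refine Finset.filter_congr fun f _ => ?_
  rw [Finsupp.ext_iff]
  refine forall_congr' fun b => ?_
  rw [hwf, hμcoe]


lemma aux_meas {n : ℕ} (x : ℝ) :
    Measurable (fun v : Fin n → EReal => (Finset.univ.filter fun i => (x : EReal) < v i).card) := by
  simp only [Finset.card_filter]
  exact Finset.measurable_sum _ fun i _ =>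
    Measurable.ite (measurableSet_lt measurable_const (measurable_pi_apply i))
      measurable_const measurable_const

lemma aux_card_zero {q' : ℕ} {v : Fin (q' + 1) → EReal} (hv : Antitone v) (x : ℝ) :
    (Finset.univ.filter fun i => (x : EReal) < v i).card = 0 ↔
      v ⟨0, Nat.succ_pos q'⟩ ≤ (x : EReal) := by
  have h0 : (⟨0, Nat.succ_pos q'⟩ : Fin (q' + 1)) = 0 := Fin.ext (by simp)
  rw [h0, Finset.card_eq_zero, Finset.filter_eq_empty_iff]
  constructor
  · intro h
    exact not_lt.mp (h (Finset.mem_univ 0))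
  · intro h i _
    exact not_lt.mpr ((hv (Fin.zero_le i)).trans h)

lemma aux_card_succ {q' : ℕ} {v : Fin (q' + 1) → EReal} (hv : Antitone v) (x : ℝ) {m : ℕ}
    (hm : m + 1 ≤ q') :
    (Finset.univ.filter fun i => (x : EReal) < v i).card = m + 1 ↔
      v ⟨m + 1, by omega⟩ ≤ (x : EReal) ∧ (x : EReal) < v ⟨m, by omega⟩ := by
  constructor
  · intro hc
    constructor
    · by_contra hx
      push_neg at hx
      have hsub : Finset.Iic (⟨m + 1, by omega⟩ : Fin (q' + 1)) ⊆
          Finset.univ.filter fun i => (x : EReal) < v i := by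
        intro i hi
        rw [Finset.mem_Iic] at hi
        exact Finset.mem_filter.mpr ⟨Finset.mem_univ _, lt_of_lt_of_le hx (hv hi)⟩
      have := Finset.card_le_card hsub
      simp only [Fin.card_Iic, hc] at this
      omega
    · by_contra hx
      push_neg at hx
      have hsub : (Finset.univ.filter fun i => (x : EReal) < v i) ⊆
          Finset.Iio (⟨m, by omega⟩ : Fin (q' + 1)) := by
        intro i hi
        rw [Finset.mem_filter] at hi
        rw [Finset.mem_Iio]
        by_contra hmi
        push_neg at hmi
        exact absurd (lt_of_lt_of_le hi.2 ((hv hmi).trans hx)) (lt_irrefl _)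
      have := Finset.card_le_card hsub
      simp only [Fin.card_Iio, hc] at this
      omega
  · rintro ⟨h1, h2⟩
    have : (Finset.univ.filter fun i => (x : EReal) < v i) =
        Finset.Iic (⟨m, by omega⟩ : Fin (q' + 1)) := by
      ext i
      rw [Finset.mem_filter, Finset.mem_Iic]
      constructor
      · rintro ⟨-, hi⟩
        by_contra hmi
        push_neg at hmi
        have : (⟨m + 1, by omega⟩ : Fin (q' + 1)) ≤ i := by
          rw [Fin.lt_def] at hmi
          rw [Fin.le_def]
          simp only [] at hmi ⊢
          omega
        exact absurd (lt_of_lt_of_le hi ((hv this).trans h1)) (lt_irrefl _)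
      · intro hi
        exact ⟨Finset.mem_univ _, lt_of_lt_of_le h2 (hv hi)⟩
    rw [this, Fin.card_Iic]

lemma aux_comb {q' N k : ℕ} (hqN : q' + 1 ≤ N) (hk : k ≤ q') (ρ : ℕ → ℝ) :
    (∑ g ∈ (Finset.univ.filter fun g : Fin N → Fin (q' + 1) =>
        (∑ l, (g l : ℕ)) ≤ q' ∧ (Finset.univ.filter fun l => 1 ≤ (g l : ℕ)).card = k),
      ∏ l, ρ (g l : ℕ)) =
    ∑ j ∈ ((Fintype.piFinset fun _ : Fin q' => Finset.range (q' + 1)).filter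
        fun j => (∑ i, j i) = k ∧ (∑ i, (i.val + 1) * j i) ≤ q'),
      ((N.factorial : ℝ) / ((∏ i, ((j i).factorial : ℝ)) * ((N - k).factorial : ℝ))) *
        ρ 0 ^ (N - k) * ∏ i : Fin q', ρ (i.val + 1) ^ (j i) := by
  classical
  have hkN : k ≤ N := by omega
  set G := (Finset.univ.filter fun g : Fin N → Fin (q' + 1) =>
      (∑ l, (g l : ℕ)) ≤ q' ∧ (Finset.univ.filter fun l => 1 ≤ (g l : ℕ)).card = k) with hG
  set T : (Fin N → Fin (q' + 1)) → (Fin q' → ℕ) :=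
      fun g i => (Finset.univ.filter fun l => g l = i.succ).card with hT
  -- fiber sum facts
  have hF1 : ∀ g : Fin N → Fin (q' + 1),
      (∑ m : Fin (q' + 1), (Finset.univ.filter fun l => g l = m).card) = N := by
    intro g
    rw [← Finset.card_eq_sum_card_fiberwise (fun l _ => Finset.mem_univ (g l))]
    simp
  have hF2 : ∀ g : Fin N → Fin (q' + 1),
      (∑ l, (g l : ℕ)) = ∑ m : Fin (q' + 1), m.val * (Finset.univ.filter fun l => g l = m).card := by
    intro g
    rw [← Finset.sum_fiberwise_of_maps_to (fun l _ => Finset.mem_univ (g l)) (fun l => (g l : ℕ))]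
    refine Finset.sum_congr rfl fun m _ => ?_
    rw [Finset.sum_congr rfl (fun l hl => by rw [(Finset.mem_filter.mp hl).2]),
      Finset.sum_const, smul_eq_mul, mul_comm]
  have hF3 : ∀ g : Fin N → Fin (q' + 1),
      (Finset.univ.filter fun l => 1 ≤ (g l : ℕ)).card
        = N - (Finset.univ.filter fun l => g l = 0).card := by
    intro g
    have hpred : (Finset.univ.filter fun l => 1 ≤ (g l : ℕ))
        = Finset.univ.filter fun l => ¬ (g l = 0) := by
      refine Finset.filter_congr fun l _ => ?_
      rw [Fin.ext_iff]
      simp only [Fin.val_zero]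
      omega
    rw [hpred, Finset.filter_not, Finset.card_sdiff_of_subset (Finset.filter_subset _ _)]
    simp
  have hmaps : ∀ g ∈ G, T g ∈ ((Fintype.piFinset fun _ : Fin q' => Finset.range (q' + 1)).filter
      fun j => (∑ i, j i) = k ∧ (∑ i, (i.val + 1) * j i) ≤ q') := by
    intro g hg
    rw [hG, Finset.mem_filter] at hg
    obtain ⟨-, hg1, hg2⟩ := hg
    have hsum2 : (∑ i : Fin q', (i.val + 1) * T g i) ≤ q' := by
      calc (∑ i : Fin q', (i.val + 1) * T g i)
          = ∑ m : Fin (q' + 1), m.val * (Finset.univ.filter fun l => g l = m).card := by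
            rw [Fin.sum_univ_succ]
            simp [hT]
        _ = ∑ l, (g l : ℕ) := (hF2 g).symm
        _ ≤ q' := hg1
    have hsum1 : (∑ i : Fin q', T g i) = k := by
      have h1 : ((Finset.univ.filter fun l => g l = (0 : Fin (q' + 1))).card
          + ∑ i : Fin q', T g i) = N := by
        have h0 := hF1 g
        rw [Fin.sum_univ_succ] at h0
        exact h0
      have h3 := hF3 g
      rw [hg2] at h3
      have hfle : (Finset.univ.filter fun l => g l = (0 : Fin (q' + 1))).card ≤ N :=
        le_trans (Finset.card_le_card (Finset.filter_subset _ _)) (by simp)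
      omega
    rw [Finset.mem_filter]
    refine ⟨?_, hsum1, hsum2⟩
    rw [Fintype.mem_piFinset]
    intro i
    rw [Finset.mem_range]
    have h1 : (i.val + 1) * T g i ≤ q' :=
      le_trans (Finset.single_le_sum (f := fun i : Fin q' => (i.val + 1) * T g i)
        (fun _ _ => Nat.zero_le _) (Finset.mem_univ i)) hsum2
    have h2 : T g i ≤ (i.val + 1) * T g i :=
      Nat.le_mul_of_pos_left (T g i) (by omega)
    omega
  rw [← Finset.sum_fiberwise_of_maps_to hmaps (fun g => ∏ l, ρ (g l : ℕ))]
  refine Finset.sum_congr rfl fun j hj => ?_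
  rw [Finset.mem_filter, Fintype.mem_piFinset] at hj
  obtain ⟨hjr, hjk, hjq⟩ := hj
  set n' : Fin (q' + 1) → ℕ := fun m => Fin.cases (N - k) j m with hn'
  have hfilter : G.filter (fun g => T g = j)
      = Finset.univ.filter (fun g : Fin N → Fin (q' + 1) =>
          ∀ m, (Finset.univ.filter fun l => g l = m).card = n' m) := by
    ext g
    simp only [Finset.mem_filter, Finset.mem_univ, true_and, hG]
    constructor
    · rintro ⟨⟨hg1, hg2⟩, hTg⟩ m
      have hfib : ∀ i : Fin q', (Finset.univ.filter fun l => g l = i.succ).card = j i :=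
        fun i => congrFun hTg i
      refine Fin.cases ?_ (fun i => ?_) m
      · have h1 := hF1 g
        rw [Fin.sum_univ_succ] at h1
        have h2 : (∑ i : Fin q', (Finset.univ.filter fun l => g l = i.succ).card) = k := by
          rw [Finset.sum_congr rfl fun i _ => hfib i]; exact hjk
        simp only [hn', Fin.cases_zero]
        omega
      · simp only [hn', Fin.cases_succ]
        exact hfib i
    · intro hfib
      have hT0 : T g = j := funext fun i => by
        have := hfib i.succ
        simpa [hn'] using this
      refine ⟨⟨?_, ?_⟩, hT0⟩
      · rw [hF2 g, Fin.sum_univ_succ]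
        simp only [Fin.val_zero, zero_mul, zero_add]
        calc (∑ i : Fin q', (i.succ : Fin (q' + 1)).val *
              (Finset.univ.filter fun l => g l = i.succ).card)
            = ∑ i : Fin q', (i.val + 1) * j i := by
              refine Finset.sum_congr rfl fun i _ => ?_
              rw [hfib i.succ]
              simp [hn']
          _ ≤ q' := hjq
      · rw [hF3 g, hfib 0]
        simp only [hn', Fin.cases_zero]
        omega
  rw [hfilter]
  have hval : ∀ g ∈ Finset.univ.filter (fun g : Fin N → Fin (q' + 1) =>
      ∀ m, (Finset.univ.filter fun l => g l = m).card = n' m),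
      (∏ l, ρ (g l : ℕ)) = ρ 0 ^ (N - k) * ∏ i : Fin q', ρ (i.val + 1) ^ (j i) := by
    intro g hg
    rw [Finset.mem_filter] at hg
    have hfib := hg.2
    rw [← Finset.prod_fiberwise_of_maps_to (fun l _ => Finset.mem_univ (g l))
      (fun l => ρ (g l : ℕ))]
    have hinner : ∀ m : Fin (q' + 1),
        (∏ l ∈ Finset.univ.filter fun l => g l = m, ρ (g l : ℕ)) = ρ m.val ^ (n' m) := by
      intro m
      rw [Finset.prod_congr rfl (fun l hl => by rw [(Finset.mem_filter.mp hl).2]),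
        Finset.prod_const, hfib m]
    rw [Finset.prod_congr rfl fun m _ => hinner m, Fin.prod_univ_succ]
    simp [hn']
  rw [Finset.sum_congr rfl hval, Finset.sum_const, nsmul_eq_mul]
  have hcard : (Finset.univ.filter (fun g : Fin N → Fin (q' + 1) =>
      ∀ m, (Finset.univ.filter fun l => g l = m).card = n' m)).card
        = Nat.multinomial Finset.univ n' := by
    have hsum : (∑ m : Fin (q' + 1), n' m) = Fintype.card (Fin N) := by
      rw [Fin.sum_univ_succ, Fintype.card_fin]
      simp only [hn', Fin.cases_zero, Fin.cases_succ]
      rw [hjk]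
      exact Nat.sub_add_cancel hkN
    have hacf := aux_card_fiber n' hsum
    convert hacf using 2
    congr 1
  have hspec := Nat.multinomial_spec (Finset.univ : Finset (Fin (q' + 1))) n'
  have hprodsplit : (∏ m : Fin (q' + 1), (n' m).factorial)
      = (N - k).factorial * ∏ i : Fin q', (j i).factorial := by
    rw [Fin.prod_univ_succ]
    simp [hn']
  have hsumN : (∑ m : Fin (q' + 1), n' m) = N := by
    rw [Fin.sum_univ_succ]
    simp only [hn', Fin.cases_zero, Fin.cases_succ]
    rw [hjk]
    exact Nat.sub_add_cancel hkN
  rw [hprodsplit, hsumN] at hspec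
  have hmult : (Nat.multinomial Finset.univ n' : ℝ)
      = (N.factorial : ℝ) / ((∏ i, ((j i).factorial : ℝ)) * ((N - k).factorial : ℝ)) := by
    rw [eq_div_iff (by
      refine ne_of_gt (mul_pos (Finset.prod_pos fun i _ => ?_) ?_)
      · exact_mod_cast (j i).factorial_pos
      · exact_mod_cast (N - k).factorial_pos)]
    have hnat : Nat.multinomial Finset.univ n' * ((∏ i, (j i).factorial) * (N - k).factorial)
        = N.factorial := by
      rw [mul_comm (Nat.multinomial Finset.univ n'), mul_comm (∏ i, (j i).factorial)]
      exact hspec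
    exact_mod_cast hnat
  rw [hcard, hmult]
  ring


end AuxiliaryLemmas

set_option maxHeartbeats 1000000

/-- Let `(ζ_l⁽¹⁾, …, ζ_l⁽q⁾)`, `l = 1, …, N` (indexed here by `Fin N`),
be i.i.d. random vectors with values in `(ℝ ∪ {-∞})^q` (formalized as `EReal`-valued),
each a.s. nonincreasing in the upper index.  Fix a level `x` and let
`c_l := #{i : ζ_l⁽ⁱ⁾ > x}`.  Then for every `k ≤ q - 1`,
`P(∑_l c_l ≤ q-1, #{l : c_l ≥ 1} = k)` equals the multinomial sum
`∑_{(j_1,…,j_{q-1}) ∈ J_{q,k}} N!/(j_1!⋯j_{q-1}!(N-k)!) ·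
P(ζ⁽¹⁾ ≤ x)^{N-k} ∏_i P(ζ⁽ⁱ⁺¹⁾ ≤ x < ζ⁽ⁱ⁾)^{j_i}`,
where `J_{q,k}` is the set of `(j_1,…,j_{q-1}) ∈ ℕ^{q-1}` with `∑ j_i = k` and
`∑ i·j_i ≤ q-1`. -/
theorem block_exceedance_multinomial
    {Ω : Type*} [MeasurableSpace Ω] (P : Measure Ω) [IsProbabilityMeasure P]
    (q N : ℕ) (hq : 1 ≤ q) (hqN : q ≤ N)
    (ζ : Fin N → Ω → Fin q → EReal)
    (hmeas : ∀ l, Measurable (ζ l))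
    (hindep : iIndepFun ζ P)
    (hid : ∀ l, IdentDistrib (ζ l) (ζ ⟨0, by omega⟩) P P)
    (hmono : ∀ l, ∀ᵐ ω ∂P, Antitone (ζ l ω))
    (x : ℝ) (k : ℕ) (hk : k ≤ q - 1) :
    (P {ω | (∑ l : Fin N, Nat.card {i : Fin q // (x : EReal) < ζ l ω i}) ≤ q - 1 ∧
        Nat.card {l : Fin N // 1 ≤ Nat.card {i : Fin q // (x : EReal) < ζ l ω i}} = k}).toReal =
      ∑ j ∈ ((Fintype.piFinset (fun _ : Fin (q - 1) => Finset.range q)).filter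
          (fun j => (∑ i, j i) = k ∧ (∑ i, (i.val + 1) * j i) ≤ q - 1)),
        ((Nat.factorial N : ℝ) /
            ((∏ i, (Nat.factorial (j i) : ℝ)) * (Nat.factorial (N - k) : ℝ))) *
          (P {ω | ζ ⟨0, by omega⟩ ω ⟨0, by omega⟩ ≤ (x : EReal)}).toReal ^ (N - k) *
          ∏ i : Fin (q - 1),
            (P {ω | ζ ⟨0, by omega⟩ ω ⟨i.val + 1, by have := i.isLt; omega⟩ ≤ (x : EReal) ∧
                (x : EReal) < ζ ⟨0, by omega⟩ ω ⟨i.val, by have := i.isLt; omega⟩}).toReal ^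
              (j i) := by
  classical
  obtain ⟨q', rfl⟩ : ∃ q', q = q' + 1 := ⟨q - 1, by omega⟩
  simp only [Nat.add_sub_cancel] at hk ⊢
  set c : (Fin (q' + 1) → EReal) → ℕ :=
    fun v => (Finset.univ.filter fun i => (x : EReal) < v i).card with hcdef
  have hSmeas : ∀ m : ℕ, MeasurableSet {v : Fin (q' + 1) → EReal | c v = m} := fun m =>
    aux_meas x (measurableSet_singleton m)
  have hnat : ∀ (l : Fin N) (ω : Ω),
      Nat.card {i : Fin (q' + 1) // (x : EReal) < ζ l ω i} = c (ζ l ω) := by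
    intro l ω
    rw [Nat.card_eq_fintype_card, Fintype.card_subtype]
  have hnat2 : ∀ ω : Ω,
      Nat.card {l : Fin N // 1 ≤ c (ζ l ω)}
        = (Finset.univ.filter fun l => 1 ≤ c (ζ l ω)).card := by
    intro ω
    rw [Nat.card_eq_fintype_card, Fintype.card_subtype]
  have hsetL : {ω | (∑ l : Fin N, Nat.card {i : Fin (q' + 1) // (x : EReal) < ζ l ω i}) ≤ q' ∧
        Nat.card {l : Fin N // 1 ≤ Nat.card {i : Fin (q' + 1) // (x : EReal) < ζ l ω i}} = k}
      = {ω | (∑ l, c (ζ l ω)) ≤ q' ∧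
          (Finset.univ.filter fun l => 1 ≤ c (ζ l ω)).card = k} := by
    ext ω
    simp only [Set.mem_setOf_eq, hnat]
    rw [hnat2 ω]
  have hEdecomp : {ω | (∑ l, c (ζ l ω)) ≤ q' ∧
        (Finset.univ.filter fun l => 1 ≤ c (ζ l ω)).card = k}
      = ⋃ g ∈ (Finset.univ.filter fun g : Fin N → Fin (q' + 1) =>
          (∑ l, (g l : ℕ)) ≤ q' ∧ (Finset.univ.filter fun l => 1 ≤ (g l : ℕ)).card = k),
        ⋂ l, ζ l ⁻¹' {v | c v = ((g l : ℕ))} := by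
    ext ω
    simp only [Set.mem_setOf_eq, Set.mem_iUnion, Set.mem_iInter, Set.mem_preimage,
      Finset.mem_filter, Finset.mem_univ, true_and, exists_prop]
    constructor
    · rintro ⟨h1, h2⟩
      have hbound : ∀ l, c (ζ l ω) < q' + 1 := fun l =>
        lt_of_le_of_lt (le_trans (Finset.single_le_sum (f := fun l => c (ζ l ω))
          (fun _ _ => Nat.zero_le _) (Finset.mem_univ l)) h1) (Nat.lt_succ_self q')
      exact ⟨fun l => ⟨c (ζ l ω), hbound l⟩, ⟨h1, h2⟩, fun l => rfl⟩
    · rintro ⟨g, ⟨h1, h2⟩, hg⟩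
      constructor
      · calc (∑ l, c (ζ l ω)) = ∑ l, (g l : ℕ) := Finset.sum_congr rfl fun l _ => hg l
          _ ≤ q' := h1
      · rw [show (Finset.univ.filter fun l => 1 ≤ c (ζ l ω))
            = Finset.univ.filter fun l => 1 ≤ (g l : ℕ) from
          Finset.filter_congr fun l _ => by rw [hg l]]
        exact h2
  have hdisj : ((Finset.univ.filter fun g : Fin N → Fin (q' + 1) =>
        (∑ l, (g l : ℕ)) ≤ q' ∧ (Finset.univ.filter fun l => 1 ≤ (g l : ℕ)).card = k) :
        Set (Fin N → Fin (q' + 1))).PairwiseDisjoint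
      (fun g => ⋂ l, ζ l ⁻¹' {v | c v = ((g l : ℕ))}) := by
    intro g _ g' _ hne
    refine Set.disjoint_left.mpr fun ω h1 h2 => hne (funext fun l => Fin.ext ?_)
    rw [Set.mem_iInter] at h1 h2
    have e1 := h1 l
    have e2 := h2 l
    rw [Set.mem_preimage, Set.mem_setOf_eq] at e1 e2
    rw [← e1, ← e2]
  have hmeasA : ∀ g : Fin N → Fin (q' + 1),
      MeasurableSet (⋂ l, ζ l ⁻¹' {v | c v = ((g l : ℕ))}) :=
    fun g => MeasurableSet.iInter fun l => (hmeas l) (hSmeas _)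
  have hPprod : ∀ g : Fin N → Fin (q' + 1),
      P (⋂ l, ζ l ⁻¹' {v | c v = ((g l : ℕ))})
        = ∏ l, P (ζ (⟨0, by omega⟩ : Fin N) ⁻¹' {v | c v = ((g l : ℕ))}) := by
    intro g
    rw [hindep.meas_iInter fun l => ⟨{v | c v = ((g l : ℕ))}, hSmeas _, rfl⟩]
    exact Finset.prod_congr rfl fun l _ => (hid l).measure_mem_eq (hSmeas _)
  have hr0 : P (ζ (⟨0, by omega⟩ : Fin N) ⁻¹' {v | c v = 0})
      = P {ω | ζ ⟨0, by omega⟩ ω ⟨0, Nat.succ_pos q'⟩ ≤ (x : EReal)} := by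
    refine measure_congr (Filter.eventuallyEq_set.mpr ?_)
    filter_upwards [hmono ⟨0, by omega⟩] with ω hω
    exact aux_card_zero hω x
  have hrs : ∀ i : Fin q', P (ζ (⟨0, by omega⟩ : Fin N) ⁻¹' {v | c v = i.val + 1})
      = P {ω | ζ ⟨0, by omega⟩ ω ⟨i.val + 1, by have := i.isLt; omega⟩ ≤ (x : EReal) ∧
          (x : EReal) < ζ ⟨0, by omega⟩ ω ⟨i.val, by have := i.isLt; omega⟩} := by
    intro i
    refine measure_congr (Filter.eventuallyEq_set.mpr ?_)
    filter_upwards [hmono ⟨0, by omega⟩] with ω hω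
    exact aux_card_succ hω x (by have := i.isLt; omega)
  rw [hsetL, hEdecomp, measure_biUnion_finset hdisj fun g _ => hmeasA g,
    ENNReal.toReal_sum fun g _ => measure_ne_top P _]
  have hstep : ∀ g ∈ (Finset.univ.filter fun g : Fin N → Fin (q' + 1) =>
      (∑ l, (g l : ℕ)) ≤ q' ∧ (Finset.univ.filter fun l => 1 ≤ (g l : ℕ)).card = k),
      (P (⋂ l, ζ l ⁻¹' {v | c v = ((g l : ℕ))})).toReal
        = ∏ l, (P (ζ (⟨0, by omega⟩ : Fin N) ⁻¹' {v | c v = ((g l : ℕ))})).toReal := by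
    intro g _
    rw [hPprod g, ENNReal.toReal_prod]
  rw [Finset.sum_congr rfl hstep,
    aux_comb hqN hk (fun m => (P (ζ (⟨0, by omega⟩ : Fin N) ⁻¹' {v | c v = m})).toReal)]
  refine Finset.sum_congr rfl fun j hj => ?_
  rw [hr0]
  congr 1
  exact Finset.prod_congr rfl fun i _ => by rw [hrs i]
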